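/- If W_c and W_o are positive definite Hermitian n×n matrices whose product W_c W_o has distinct eigenvalues, then there exists an invertible matrix T such that T⁻¹ W_c (T†)⁻¹ = T† W_o T = Σ, where Σ is a diagonal matrix whose diagonal entries are the positive square roots of the eigenvalues of W_c W_o (a balancing transformation exists). -/

import Mathlib

open Matrix
open scoped ComplexOrder
open Polynomial

lemma my_charpoly_conj {n : ℕ} (P A : Matrix (Fin n) (Fin n) ℂ) (hP : IsUnit P.det) :
    (P * A * P⁻¹).charpoly = A.charpoly := by
  have h1 : P * P⁻¹ = 1 := mul_nonsing_inv P hP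
  have hdet : P.det * P⁻¹.det = 1 := by rw [← det_mul, h1, det_one]
  have hsc : P.map C * Matrix.scalar (Fin n) (X : ℂ[X]) * P⁻¹.map C
      = Matrix.scalar (Fin n) (X : ℂ[X]) := by
    rw [mul_assoc, (scalar_commute (X : ℂ[X]) (fun r' => Commute.all _ _) (P⁻¹.map C)).eq,
      ← mul_assoc, ← Matrix.map_mul, h1]
    simp
  have key : charmatrix (P * A * P⁻¹)
      = P.map C * charmatrix A * P⁻¹.map C := by
    rw [charmatrix, charmatrix]
    simp only [RingHom.mapMatrix_apply, sub_mul, mul_sub, ← Matrix.map_mul, hsc, mul_assoc]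
  have hPd : (P.map C).det * (P⁻¹.map C).det = 1 := by
    rw [← RingHom.mapMatrix_apply, ← RingHom.mapMatrix_apply, ← RingHom.map_det,
      ← RingHom.map_det, ← _root_.map_mul, hdet, Polynomial.C_1]
  rw [Matrix.charpoly, Matrix.charpoly, key, det_mul, det_mul]
  rw [mul_comm ((P.map C).det) _, mul_assoc, hPd, mul_one]



/-- If `W_c`, `W_o` are Hermitian positive definite and `W_c W_o` has distinct eigenvalues,
then there exists a balancing transformation: an invertible `T` with
`T⁻¹ W_c (Tᴴ)⁻¹ = Tᴴ W_o T = Σ`, where `Σ` is diagonal with strictly positive entries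
whose squares are precisely the eigenvalues (with multiplicity) of `W_c W_o`. -/
theorem balancing_transformation_exists
    (n : ℕ) (Wc Wo : Matrix (Fin n) (Fin n) ℂ)
    (hWc : Wc.PosDef) (hWo : Wo.PosDef)
    (hdistinct : (Wc * Wo).charpoly.roots.Nodup) :
    ∃ (T : Matrix (Fin n) (Fin n) ℂ) (d : Fin n → ℝ),
      IsUnit T.det ∧
      (∀ i, 0 < d i) ∧
      T⁻¹ * Wc * (Tᴴ)⁻¹ = Matrix.diagonal (fun i => (d i : ℂ)) ∧
      Tᴴ * Wo * T = Matrix.diagonal (fun i => (d i : ℂ)) ∧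
      (Wc * Wo).charpoly =
        ∏ i : Fin n, (Polynomial.X - Polynomial.C ((d i : ℂ) ^ 2)) := by
  classical
  have hWcps := hWc.posSemidef
  open scoped MatrixOrder in
  set L := CFC.sqrt Wc with hLdef
  open scoped MatrixOrder in
  have hLherm : L.IsHermitian := (Matrix.nonneg_iff_posSemidef.mp (CFC.sqrt_nonneg Wc)).1
  open scoped MatrixOrder in
  have hLL : L * L = Wc := CFC.sqrt_mul_sqrt_self Wc (Matrix.nonneg_iff_posSemidef.mpr hWcps)
  have hWcdet : Wc.det ≠ 0 := hWc.det_pos.ne'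
  have hLdet : IsUnit L.det := by
    have h : L.det * L.det = Wc.det := by rw [← det_mul, hLL]
    exact isUnit_iff_ne_zero.mpr (fun h0 => hWcdet (by rw [← h, h0, zero_mul]))
  have hLunit : IsUnit L := (isUnit_iff_isUnit_det L).mpr hLdet
  -- M = L Wo L is positive definite
  have hM : (L * Wo * L).PosDef := by
    have hli : Function.Injective L.mulVec := mulVec_injective_iff_isUnit.mpr hLunit
    have hMalt : L * Wo * L = Lᴴ * Wo * L := by rw [hLherm.eq]
    rw [hMalt]
    refine Matrix.PosDef.of_dotProduct_mulVec_pos (isHermitian_conjTranspose_mul_mul L hWo.1) fun x hx => ?_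
    have hLx : L *ᵥ x ≠ 0 := fun h => hx (hli (by simpa using h))
    simpa only [star_mulVec, dotProduct_mulVec, vecMul_vecMul] using hWo.dotProduct_mulVec_pos hLx
  have hMh : (L * Wo * L).IsHermitian := hM.1
  set ev := hMh.eigenvalues with hevdef
  have hevpos : ∀ i, 0 < ev i := hM.eigenvalues_pos
  set U : Matrix (Fin n) (Fin n) ℂ := (hMh.eigenvectorUnitary : Matrix (Fin n) (Fin n) ℂ)
    with hUdef
  have hU1 : U * star U = 1 := mem_unitaryGroup_iff.mp (hMh.eigenvectorUnitary).2
  have hU2 : star U * U = 1 := mem_unitaryGroup_iff'.mp (hMh.eigenvectorUnitary).2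
  have hspec : L * Wo * L = U * diagonal (RCLike.ofReal ∘ ev) * star U := hMh.spectral_theorem
  set Dev : Matrix (Fin n) (Fin n) ℂ := diagonal (RCLike.ofReal ∘ ev) with hDevdef
  have hDev : Dev = diagonal (fun i => (ev i : ℂ)) := rfl
  -- square roots
  set d : Fin n → ℝ := fun i => Real.sqrt (ev i) with hddef
  have hdpos : ∀ i, 0 < d i := fun i => Real.sqrt_pos.mpr (hevpos i)
  have hd2 : ∀ i, d i ^ 2 = ev i := fun i => Real.sq_sqrt (hevpos i).le
  set e : Fin n → ℝ := fun i => Real.sqrt (d i) with hedef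
  have hepos : ∀ i, 0 < e i := fun i => Real.sqrt_pos.mpr (hdpos i)
  have he2 : ∀ i, e i ^ 2 = d i := fun i => Real.sq_sqrt (hdpos i).le
  have heC : ∀ i, (e i : ℂ) ≠ 0 := fun i => by exact_mod_cast (hepos i).ne'
  set E : Matrix (Fin n) (Fin n) ℂ := diagonal (fun i => ((e i : ℂ))⁻¹) with hEdef
  set Dd : Matrix (Fin n) (Fin n) ℂ := diagonal (fun i => (d i : ℂ)) with hDddef
  set T : Matrix (Fin n) (Fin n) ℂ := L * U * E with hTdef
  -- conjugate transposes
  have hEherm : Eᴴ = E := by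
    rw [hEdef, diagonal_conjTranspose]
    have : (star fun i => ((e i : ℂ))⁻¹) = fun i => ((e i : ℂ))⁻¹ := by
      funext i
      simp [Pi.star_apply, ← Complex.ofReal_inv]
    rw [this]
  have hTH : Tᴴ = E * star U * L := by
    rw [hTdef, conjTranspose_mul, conjTranspose_mul, hEherm, hLherm.eq,
      star_eq_conjTranspose, mul_assoc]
  -- diagonal computations
  have hEDevE : E * Dev * E = Dd := by
    rw [hEdef, hDev, hDddef, diagonal_mul_diagonal, diagonal_mul_diagonal]
    have hfun : (fun i => ((e i : ℂ))⁻¹ * (ev i : ℂ) * ((e i : ℂ))⁻¹)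
        = fun i => (d i : ℂ) := by
      funext i
      have h4 : (ev i : ℂ) = (e i : ℂ) ^ 2 * (e i : ℂ) ^ 2 := by
        push_cast [← hd2 i, ← he2 i]; ring
      have h5 : (d i : ℂ) = (e i : ℂ) ^ 2 := by push_cast [← he2 i]; ring
      have hx : (e i : ℂ) ≠ 0 := heC i
      rw [h4, h5]
      field_simp
    rw [hfun]
  have hEDdE : E * Dd * E = 1 := by
    rw [hEdef, hDddef, diagonal_mul_diagonal, diagonal_mul_diagonal, ← diagonal_one]
    have hfun : (fun i => ((e i : ℂ))⁻¹ * (d i : ℂ) * ((e i : ℂ))⁻¹)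
        = fun _ => (1 : ℂ) := by
      funext i
      have h5 : (d i : ℂ) = (e i : ℂ) ^ 2 := by push_cast [← he2 i]; ring
      have hx : (e i : ℂ) ≠ 0 := heC i
      rw [h5]
      field_simp
    rw [hfun]
  -- units
  have hUdet : IsUnit U.det :=
    IsUnit.of_mul_eq_one (star U).det (by rw [← det_mul, hU1, det_one])
  have hUunit : IsUnit U := (isUnit_iff_isUnit_det U).mpr hUdet
  have hED1 : E * diagonal (fun i => (e i : ℂ)) = 1 := by
    rw [hEdef, diagonal_mul_diagonal, ← diagonal_one]
    have hfun : (fun i => ((e i : ℂ))⁻¹ * (e i : ℂ)) = fun _ => (1 : ℂ) := by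
      funext i
      exact inv_mul_cancel₀ (heC i)
    rw [hfun]
  have hEdet : IsUnit E.det :=
    IsUnit.of_mul_eq_one (diagonal fun i => (e i : ℂ)).det (by rw [← det_mul, hED1, det_one])
  have hTdet : IsUnit T.det := by
    rw [hTdef, det_mul, det_mul]
    exact (hLdet.mul hUdet).mul hEdet
  have hTHdet : IsUnit (Tᴴ).det := by
    rw [det_conjTranspose]
    exact hTdet.star
  -- the two gramian identities
  have hWoT : Tᴴ * Wo * T = Dd := by
    calc Tᴴ * Wo * T = E * star U * (L * Wo * L) * U * E := by
          rw [hTH, hTdef]; simp only [mul_assoc]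
    _ = E * star U * (U * Dev * star U) * U * E := by rw [hspec]
    _ = E * ((star U * U) * Dev * (star U * U)) * E := by simp only [mul_assoc]
    _ = E * Dev * E := by rw [hU2]; simp only [one_mul, mul_one]
    _ = Dd := hEDevE
  have hWcT : T * Dd * Tᴴ = Wc := by
    calc T * Dd * Tᴴ = L * (U * ((E * Dd * E) * star U)) * L := by
          rw [hTH, hTdef]; simp only [mul_assoc]
    _ = L * (U * star U) * L := by rw [hEDdE, one_mul, mul_assoc]
    _ = Wc := by rw [hU1, mul_one, hLL]
  refine ⟨T, d, hTdet, hdpos, ?_, hWoT, ?_⟩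
  · rw [← hWcT]
    calc T⁻¹ * (T * Dd * Tᴴ) * (Tᴴ)⁻¹
        = (T⁻¹ * T) * (Dd * (Tᴴ * (Tᴴ)⁻¹)) := by simp only [mul_assoc]
    _ = Dd := by rw [nonsing_inv_mul T hTdet, mul_nonsing_inv _ hTHdet, one_mul, mul_one]
  · have h5 : L * (L * Wo * L) * L⁻¹ = Wc * Wo := by
      calc L * (L * Wo * L) * L⁻¹ = (L * L) * Wo * (L * L⁻¹) := by simp only [mul_assoc]
      _ = Wc * Wo := by rw [hLL, mul_nonsing_inv L hLdet, mul_one]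
    have h6 : U * Dev * U⁻¹ = L * Wo * L := by
      rw [inv_eq_left_inv hU2]
      exact hspec.symm
    rw [← h5, my_charpoly_conj L _ hLdet, ← h6, my_charpoly_conj U _ ((isUnit_iff_isUnit_det U).mp hUunit)]
    rw [hDev, charpoly_of_upperTriangular _ (blockTriangular_diagonal _)]
    refine Finset.prod_congr rfl fun i _ => ?_
    rw [diagonal_apply_eq]
    congr 1
    push_cast [← hd2 i]
    ring
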